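/- Let cl be a closure operator on a set I and let B ⊇ C be finite subsets of I such that B is not contained in cl(C). Then there exists some b ∈ B \ cl(C) which is minimal in B over C, i.e., for every b' ∈ (B ∩ cl({b} ∪ C)) \ cl(C), we have b ∈ cl({b'} ∪ C). -/
import Mathlib


/-- A closure operator on a set (type) `I`. -/
structure IsClosureOp {I : Type*} (cl : Set I → Set I) : Prop where
  extensive : ∀ A, A ⊆ cl A
  mono : ∀ A B : Set I, A ⊆ B → cl A ⊆ cl B
  idem : ∀ A, cl (cl A) = cl A

/-- The independence relation derived from `cl`: `A ⫫_C B`. -/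
def Indep {I : Type*} (cl : Set I → Set I) (A C B : Set I) : Prop :=
  A ∩ cl (B ∪ C) ⊆ cl C ∧ B ∩ cl (A ∪ C) ⊆ cl C

/-- `b` is minimal in `B` over `C` (with respect to `cl`). -/
def MinimalOver {I : Type*} (cl : Set I → Set I) (B C : Set I) (b : I) : Prop :=
  b ∈ B \ cl C ∧ ∀ b' ∈ (B ∩ cl (insert b C)) \ cl C, b ∈ cl (insert b' C)


/-- If `B ⊇ C` are finite and `B ⊄ cl C`, there is `b ∈ B \ cl C` minimal in `B` over `C`. -/
theorem stmt_0 {I : Type*} (cl : Set I → Set I) (hcl : IsClosureOp cl)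
    (B C : Set I) (hB : B.Finite) (hC : C.Finite) (hCB : C ⊆ B)
    (h : ¬ B ⊆ cl C) :
    ∃ b, MinimalOver cl B C b := by
  classical
  set T : Set I := B \ cl C with hT
  have hTne : T.Nonempty := by
    rw [Set.nonempty_iff_ne_empty]
    intro he
    apply h
    intro x hx
    by_contra hxc
    have : x ∈ T := ⟨hx, hxc⟩
    simp [he] at this
  set f : I → ℕ := fun b => (B ∩ cl (insert b C)).ncard with hf
  -- choose b ∈ T minimizing f
  obtain ⟨b, hbT, hbn⟩ := Nat.sInf_mem (hTne.image f)
  refine ⟨b, hbT, ?_⟩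
  intro b' hb'
  obtain ⟨⟨hb'B, hb'cl⟩, hb'nc⟩ := hb'
  have hb'T : b' ∈ T := ⟨hb'B, hb'nc⟩
  -- cl (insert b' C) ⊆ cl (insert b C)
  have hsub : cl (insert b' C) ⊆ cl (insert b C) := by
    have h1 : insert b' C ⊆ cl (insert b C) := by
      intro x hx
      rcases hx with rfl | hx
      · exact hb'cl
      · exact hcl.extensive _ (Set.subset_insert _ _ hx)
    have := hcl.mono _ _ h1
    rwa [hcl.idem] at this
  have hS : B ∩ cl (insert b' C) ⊆ B ∩ cl (insert b C) :=
    Set.inter_subset_inter_right _ hsub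
  have hfin : (B ∩ cl (insert b C)).Finite := hB.inter_of_left _
  have hle : f b ≤ f b' := by
    rw [hbn]
    exact Nat.sInf_le ⟨b', hb'T, rfl⟩
  have heq : B ∩ cl (insert b' C) = B ∩ cl (insert b C) :=
    Set.eq_of_subset_of_ncard_le hS hle hfin
  have hbmem : b ∈ B ∩ cl (insert b C) :=
    ⟨hbT.1, hcl.extensive _ (Set.mem_insert _ _)⟩
  rw [← heq] at hbmem
  exact hbmem.2
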